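/- Let F be a positive integer and for f = 1, …, F let n_f be positive integers; let P_L be a real n_L × n_L matrix, and for each f let P_{R_f} be a real n_f × n_f matrix, B_f a real n_f × n_f matrix such that P_{R_f} B_f is symmetric positive semidefinite, I_{LR}^f a real n_f × n_L matrix and I_{RL}^f a real n_L × n_f matrix satisfying P_L I_{RL}^f = (I_{LR}^f)ᵀ P_{R_f}. Then for all vectors w_L ∈ ℝ^{n_L} and w_f ∈ ℝ^{n_f} (f = 1, …, F), w_Lᵀ P_L Σ_{f=1}^F I_{RL}^f B_f ( I_{LR}^f w_L − w_f ) + Σ_{f=1}^F w_fᵀ P_{R_f} B_f ( w_f − I_{LR}^f w_L ) = Σ_{f=1}^F ( I_{LR}^f w_L − w_f )ᵀ P_{R_f} B_f ( I_{LR}^f w_L − w_f ) ≥ 0. Consequently, the total contribution of the interface dissipation simultaneous-approximation-terms to the discrete entropy rate, which is the negative of the left-hand side, is nonpositive, so the dissipation terms are entropy stable. -/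

import Mathlib

open Matrix

/-- Entropy stability of the interface dissipation SATs at an h/p-nonconforming
interface: contracting the dissipative penalty terms with the entropy variables yields a
sum of quadratic forms in the interface jumps with positive semidefinite matrices
P_{R_f} B_f, hence a nonnegative quantity; its negative (the contribution to the
discrete entropy rate) is nonpositive. -/
theorem interface_dissipation_entropy_stable
    (F nL : ℕ) (hF : 0 < F) (n : Fin F → ℕ)
    (PL : Matrix (Fin nL) (Fin nL) ℝ)
    (PR : (f : Fin F) → Matrix (Fin (n f)) (Fin (n f)) ℝ)
    (B : (f : Fin F) → Matrix (Fin (n f)) (Fin (n f)) ℝ)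
    (hPB : ∀ f, (PR f * B f).PosSemidef)
    (ILR : (f : Fin F) → Matrix (Fin (n f)) (Fin nL) ℝ)
    (IRL : (f : Fin F) → Matrix (Fin nL) (Fin (n f)) ℝ)
    (hadj : ∀ f, PL * IRL f = (ILR f)ᵀ * PR f)
    (wL : Fin nL → ℝ) (w : (f : Fin F) → Fin (n f) → ℝ) :
    wL ⬝ᵥ (PL *ᵥ ∑ f, (IRL f) *ᵥ ((B f) *ᵥ ((ILR f) *ᵥ wL - w f)))
        + ∑ f, (w f) ⬝ᵥ ((PR f) *ᵥ ((B f) *ᵥ (w f - (ILR f) *ᵥ wL)))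
      = ∑ f, ((ILR f) *ᵥ wL - w f) ⬝ᵥ
          ((PR f) *ᵥ ((B f) *ᵥ ((ILR f) *ᵥ wL - w f))) ∧
    0 ≤ ∑ f, ((ILR f) *ᵥ wL - w f) ⬝ᵥ
          ((PR f) *ᵥ ((B f) *ᵥ ((ILR f) *ᵥ wL - w f))) := by
  constructor
  · have hs : PL *ᵥ (∑ f, (IRL f) *ᵥ ((B f) *ᵥ ((ILR f) *ᵥ wL - w f)))
        = ∑ f, PL *ᵥ ((IRL f) *ᵥ ((B f) *ᵥ ((ILR f) *ᵥ wL - w f))) :=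
      map_sum PL.mulVecLin _ _
    have hd : wL ⬝ᵥ (∑ f, PL *ᵥ ((IRL f) *ᵥ ((B f) *ᵥ ((ILR f) *ᵥ wL - w f))))
        = ∑ f, wL ⬝ᵥ (PL *ᵥ ((IRL f) *ᵥ ((B f) *ᵥ ((ILR f) *ᵥ wL - w f)))) := by
      simp [dotProduct, Finset.sum_apply, Finset.mul_sum]
      exact Finset.sum_comm
    rw [hs, hd, ← Finset.sum_add_distrib]
    refine Finset.sum_congr rfl fun f _ => ?_
    set v : Fin (n f) → ℝ := (ILR f) *ᵥ wL - w f with hv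
    have h1 : wL ⬝ᵥ (PL *ᵥ ((IRL f) *ᵥ ((B f) *ᵥ v)))
        = ((ILR f) *ᵥ wL) ⬝ᵥ ((PR f) *ᵥ ((B f) *ᵥ v)) := by
      rw [mulVec_mulVec, hadj f, ← mulVec_mulVec,
        dotProduct_mulVec, vecMul_transpose]
    have h2 : w f - (ILR f) *ᵥ wL = -v := by simp [hv]
    rw [h1, h2, mulVec_neg, mulVec_neg, dotProduct_neg, sub_dotProduct]
    ring
  · refine Finset.sum_nonneg fun f _ => ?_
    have := (hPB f).dotProduct_mulVec_nonneg ((ILR f) *ᵥ wL - w f)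
    simpa [dotProduct, mulVec_mulVec, Matrix.mul_assoc] using this
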